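/- Let H be a Hilbert algebra, G an implicative semilattice, and f : H → G a map with f(1) = 1 and f(a→b) = f(a)→f(b) for all a,b ∈ H. Then there exists a unique map h : FC(H) → G such that h(X(H)) = 1, h(U ∩ V) = h(U) ∧ h(V) for all U,V ∈ FC(H), and h(φ(a)) = f(a) for all a ∈ H. -/

import Mathlib

/-- A Hilbert algebra `(H, →, 1)`. -/
structure HilbertAlgebra (H : Type*) where
  imp : H → H → H
  one : H
  ax1 : ∀ a b : H, imp a (imp b a) = one
  ax2 : ∀ a b c : H, imp (imp a (imp b c)) (imp (imp a b) (imp a c)) = one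
  ax3 : ∀ a b : H, imp a b = one → imp b a = one → a = b

namespace HilbertAlgebra

variable {H : Type*} (hH : HilbertAlgebra H)

/-- The natural order: `a ≤ b` iff `a → b = 1`. -/
def le (a b : H) : Prop := hH.imp a b = hH.one

/-- Implicative filter. -/
def IsImplicativeFilter (F : Set H) : Prop :=
  hH.one ∈ F ∧ ∀ a b : H, a ∈ F → hH.imp a b ∈ F → b ∈ F

/-- Irreducible implicative filter. -/
def IsIrreducible (F : Set H) : Prop :=
  hH.IsImplicativeFilter F ∧ F ≠ Set.univ ∧
    ∀ F₁ F₂ : Set H, hH.IsImplicativeFilter F₁ → hH.IsImplicativeFilter F₂ →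
      F = F₁ ∩ F₂ → (F = F₁ ∨ F = F₂)

/-- Order-ideal: nonempty, downward closed, up-directed (w.r.t. the natural order). -/
def IsOrderIdeal (I : Set H) : Prop :=
  I.Nonempty ∧ (∀ a b : H, b ∈ I → hH.le a b → a ∈ I) ∧
    ∀ a b : H, a ∈ I → b ∈ I → ∃ c ∈ I, hH.le a c ∧ hH.le b c

/-- `φ(a) = {P ∈ X(H) : a ∈ P}`. -/
def phi (a : H) : Set (Set H) := {P | hH.IsIrreducible P ∧ a ∈ P}

/-- An upset of `X(H)` (the poset of irreducible implicative filters, ordered by `⊆`). -/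
def IsUpsetX (U : Set (Set H)) : Prop :=
  (∀ P ∈ U, hH.IsIrreducible P) ∧
    ∀ P Q : Set H, P ∈ U → hH.IsIrreducible Q → P ⊆ Q → Q ∈ U

/-- The Heyting implication `U ⇒ V` on upsets of `X(H)`. -/
def impUps (U V : Set (Set H)) : Set (Set H) :=
  {P | hH.IsIrreducible P ∧ ∀ Q : Set H, hH.IsIrreducible Q → P ⊆ Q → Q ∈ U → Q ∈ V}

/-- `FC(H)`: finite nonempty intersections of sets of the form `φ(a)`. -/
def FC : Set (Set (Set H)) :=
  {U | ∃ l : List H, l ≠ [] ∧ U = ⋂ a ∈ l, hH.phi a}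

/-- `X*(H)`: implicative filters that are intersections of finitely many (at least one)
irreducible implicative filters. -/
def XStar : Set (Set H) :=
  {F | ∃ S : Set (Set H), S.Finite ∧ S.Nonempty ∧ (∀ P ∈ S, hH.IsIrreducible P) ∧ F = ⋂₀ S}

/-- `Φ(a) = {F ∈ X*(H) : a ∈ F}`. -/
def Phi (a : H) : Set (Set H) := {F | F ∈ hH.XStar ∧ a ∈ F}

/-- An upset of `X*(H)` (ordered by `⊆`). -/
def IsUpsetXStar (U : Set (Set H)) : Prop :=
  (∀ F ∈ U, F ∈ hH.XStar) ∧
    ∀ F K : Set H, F ∈ U → K ∈ hH.XStar → F ⊆ K → K ∈ U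

/-- The implication `U ⇒ V` on upsets of `X*(H)`. -/
def impUpsStar (U V : Set (Set H)) : Set (Set H) :=
  {F | F ∈ hH.XStar ∧ ∀ K : Set H, K ∈ hH.XStar → F ⊆ K → K ∈ U → K ∈ V}

/-- Homomorphism of Hilbert algebras. -/
def IsHom {G : Type*} (hG : HilbertAlgebra G) (f : H → G) : Prop :=
  f hH.one = hG.one ∧ ∀ a b : H, f (hH.imp a b) = hG.imp (f a) (f b)


/-! ### Auxiliary lemmas -/

theorem mp {p q : H} (hp : p = hH.one) (hpq : hH.imp p q = hH.one) : q = hH.one := by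
  have h1 : hH.imp q hH.one = hH.one := by
    have := hH.ax1 q p
    rwa [hpq] at this
  have h2 : hH.imp hH.one q = hH.one := by rwa [hp] at hpq
  exact hH.ax3 _ _ h1 h2

theorem refl (a : H) : hH.imp a a = hH.one := by
  have h1 := hH.ax2 a (hH.imp a a) a
  have h2 := hH.ax1 a (hH.imp a a)
  have h3 := hH.mp h2 h1
  exact hH.mp (hH.ax1 a a) h3

theorem imp_one (a : H) : hH.imp a hH.one = hH.one := by
  have := hH.ax1 hH.one a
  exact hH.mp rfl this

theorem mono {b c : H} (h : hH.imp b c = hH.one) (a : H) :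
    hH.imp (hH.imp a b) (hH.imp a c) = hH.one := by
  have h1 : hH.imp a (hH.imp b c) = hH.one := by rw [h]; exact hH.imp_one a
  exact hH.mp h1 (hH.ax2 a b c)

theorem trans {a b c : H} (h1 : hH.imp a b = hH.one) (h2 : hH.imp b c = hH.one) :
    hH.imp a c = hH.one := by
  have h3 := hH.mono h2 a
  rw [h1] at h3
  exact hH.mp rfl h3

/-- Iterated implication: `chain [a₁,…,aₙ] b = a₁→(a₂→⋯→(aₙ→b))`. -/
def chain (l : List H) (b : H) : H := l.foldr hH.imp b

@[simp] theorem chain_nil (b : H) : hH.chain [] b = b := rfl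
@[simp] theorem chain_cons (a : H) (t : List H) (b : H) :
    hH.chain (a :: t) b = hH.imp a (hH.chain t b) := rfl

theorem chain_one (l : List H) : hH.chain l hH.one = hH.one := by
  induction l with
  | nil => rfl
  | cons x t ih => rw [chain_cons, ih]; exact hH.imp_one x

theorem chainS (l : List H) (a b : H) :
    hH.imp (hH.chain l (hH.imp a b)) (hH.imp (hH.chain l a) (hH.chain l b)) = hH.one := by
  induction l with
  | nil => exact hH.refl _
  | cons x t ih =>
    have h1 := hH.mono ih x
    have h2 := hH.ax2 x (hH.chain t a) (hH.chain t b)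
    exact hH.trans h1 h2

theorem chain_mp {l : List H} {a b : H} (h1 : hH.chain l (hH.imp a b) = hH.one)
    (h2 : hH.chain l a = hH.one) : hH.chain l b = hH.one := by
  have h3 := hH.chainS l a b
  rw [h1] at h3
  have h4 := hH.mp rfl h3
  rw [h2] at h4
  exact hH.mp rfl h4

theorem chain_weak (t : List H) (b : H) : hH.imp b (hH.chain t b) = hH.one := by
  induction t with
  | nil => exact hH.refl b
  | cons x t ih => exact hH.trans ih (hH.ax1 (hH.chain t b) x)

theorem chain_mem {l : List H} {a : H} (h : a ∈ l) : hH.chain l a = hH.one := by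
  induction l with
  | nil => simp at h
  | cons x t ih =>
    rcases List.mem_cons.mp h with h | h
    · subst h
      exact hH.chain_weak t a
    · rw [chain_cons, ih h]; exact hH.imp_one x

/-- The implicative filter generated by the elements of `l`. -/
def gen (l : List H) : Set H := {b | hH.chain l b = hH.one}

theorem gen_filter (l : List H) : hH.IsImplicativeFilter (hH.gen l) :=
  ⟨hH.chain_one l, fun _ _ ha hab => hH.chain_mp hab ha⟩

theorem mem_gen {l : List H} {a : H} (h : a ∈ l) : a ∈ hH.gen l := hH.chain_mem h

theorem gen_min {l : List H} {F : Set H} (hF : hH.IsImplicativeFilter F)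
    (hl : ∀ a ∈ l, a ∈ F) : hH.gen l ⊆ F := by
  intro b hb
  have hc : hH.chain l b ∈ F := by
    have : hH.chain l b = hH.one := hb
    rw [this]; exact hF.1
  clear hb
  induction l with
  | nil => exact hc
  | cons x t ih =>
    exact ih (fun a ha => hl a (List.mem_cons_of_mem x ha))
      (hF.2 x (hH.chain t b) (hl x (List.mem_cons_self : x ∈ x :: t)) hc)

/-- Separation: if `b` is not in the filter generated by `l`, there is an irreducible
filter containing `gen l` and missing `b`. -/
theorem separation {l : List H} {b : H} (hb : b ∉ hH.gen l) :
    ∃ P : Set H, hH.IsIrreducible P ∧ hH.gen l ⊆ P ∧ b ∉ P := by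
  have hzorn : ∀ c ⊆ {F | hH.IsImplicativeFilter F ∧ b ∉ F}, IsChain (· ⊆ ·) c →
      c.Nonempty → ∃ ub ∈ {F | hH.IsImplicativeFilter F ∧ b ∉ F}, ∀ s ∈ c, s ⊆ ub := by
    intro c hcS hchain hcne
    refine ⟨⋃₀ c, ⟨⟨?_, ?_⟩, ?_⟩, fun s hs => Set.subset_sUnion_of_mem hs⟩
    · obtain ⟨F, hF⟩ := hcne
      exact ⟨F, hF, (hcS hF).1.1⟩
    · rintro x y ⟨F1, hF1, hx⟩ ⟨F2, hF2, hxy⟩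
      rcases hchain.total hF1 hF2 with h | h
      · exact ⟨F2, hF2, (hcS hF2).1.2 x y (h hx) hxy⟩
      · exact ⟨F1, hF1, (hcS hF1).1.2 x y hx (h hxy)⟩
    · rintro ⟨F, hF, hbF⟩
      exact (hcS hF).2 hbF
  obtain ⟨m, hgm, hm⟩ := zorn_subset_nonempty {F | hH.IsImplicativeFilter F ∧ b ∉ F} hzorn
      (hH.gen l) ⟨hH.gen_filter l, hb⟩
  refine ⟨m, ⟨hm.1.1, ?_, ?_⟩, hgm, hm.1.2⟩
  · intro h; exact hm.1.2 (h ▸ Set.mem_univ b)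
  · intro F₁ F₂ h1 h2 hFF
    by_contra hcon
    push_neg at hcon
    have key : ∀ F : Set H, hH.IsImplicativeFilter F → m ⊆ F → m ≠ F → b ∈ F := by
      intro F hF hmF hne
      by_contra hbF
      exact hne ((hm.2 ⟨hF, hbF⟩ hmF).antisymm hmF).symm
    have hb1 : b ∈ F₁ := key F₁ h1 (hFF ▸ Set.inter_subset_left) hcon.1
    have hb2 : b ∈ F₂ := key F₂ h2 (hFF ▸ Set.inter_subset_right) hcon.2
    exact hm.1.2 (hFF ▸ ⟨hb1, hb2⟩)

/-- Membership in `⋂ a ∈ l, φ a`. -/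
theorem mem_biInter_phi {l : List H} {P : Set H} :
    P ∈ ⋂ a ∈ l, hH.phi a ↔ ∀ a ∈ l, hH.IsIrreducible P ∧ a ∈ P := by
  simp [phi, Set.mem_iInter]

theorem biInter_phi_subset_phi {l : List H} {b : H} (hl : l ≠ [])
    (h : (⋂ a ∈ l, hH.phi a) ⊆ hH.phi b) : b ∈ hH.gen l := by
  by_contra hb
  obtain ⟨P, hP, hgP, hbP⟩ := hH.separation hb
  have hPmem : P ∈ ⋂ a ∈ l, hH.phi a :=
    hH.mem_biInter_phi.mpr fun a ha => ⟨hP, hgP (hH.mem_gen ha)⟩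
  exact hbP (h hPmem).2

theorem chain_imp_subset {l : List H} {b : H} (hl : l ≠ []) (h : b ∈ hH.gen l) :
    (⋂ a ∈ l, hH.phi a) ⊆ hH.phi b := by
  intro P hP
  rw [hH.mem_biInter_phi] at hP
  rcases l with _ | ⟨x, t⟩
  · exact absurd rfl hl
  · have hirr := (hP x (List.mem_cons_self : x ∈ x :: t)).1
    exact ⟨hirr, hH.gen_min hirr.1 (fun a ha => (hP a ha).2) h⟩
end HilbertAlgebra

/-- A Hilbert algebra with supremum: `(H, ∨)` is a join-semilattice whose induced
order has greatest element `1`, and `a → b = 1` iff `a ∨ b = b`. -/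
structure HilbertSup (H : Type*) extends HilbertAlgebra H where
  sup : H → H → H
  sup_comm : ∀ a b : H, sup a b = sup b a
  sup_assoc : ∀ a b c : H, sup (sup a b) c = sup a (sup b c)
  sup_idem : ∀ a : H, sup a a = a
  sup_one : ∀ a : H, sup a one = one
  imp_eq_one_iff : ∀ a b : H, imp a b = one ↔ sup a b = b

/-- Morphism of Hilbert algebras with supremum. -/
def HilbertSup.IsHomSup {H G : Type*} (hH : HilbertSup H) (hG : HilbertSup G)
    (f : H → G) : Prop :=
  hH.toHilbertAlgebra.IsHom hG.toHilbertAlgebra f ∧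
    ∀ a b : H, f (hH.sup a b) = hG.sup (f a) (f b)

/-- An implicative semilattice: a meet-semilattice with greatest element and a binary
operation `him` such that `a ⊓ b ≤ c ↔ a ≤ him b c`. -/
class ImplicativeSemilattice (G : Type*) extends SemilatticeInf G, OrderTop G where
  him : G → G → G
  inf_le_iff_le_him : ∀ a b c : G, a ⊓ b ≤ c ↔ a ≤ him b c


section MainAux

variable {H G : Type*} (hH : HilbertAlgebra H) [ImplicativeSemilattice G] (f : H → G)

/-- `listInf f [a₁,…,aₙ] = f a₁ ⊓ ⋯ ⊓ f aₙ ⊓ ⊤`. -/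
def listInf (l : List H) : G := l.foldr (fun a g => f a ⊓ g) ⊤

@[simp] theorem listInf_nil : listInf f ([] : List H) = ⊤ := rfl
@[simp] theorem listInf_cons (a : H) (t : List H) :
    listInf f (a :: t) = f a ⊓ listInf f t := rfl

variable (hf1 : f hH.one = (⊤ : G))
  (hfimp : ∀ a b : H, f (hH.imp a b) = ImplicativeSemilattice.him (f a) (f b))

include hfimp in
theorem inf_chain_le (l : List H) (b : H) (g : G) (h : g ≤ f (hH.chain l b)) :
    g ⊓ listInf f l ≤ f b := by
  induction l generalizing g with
  | nil => exact le_trans inf_le_left h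
  | cons x t ih =>
    rw [HilbertAlgebra.chain_cons, hfimp] at h
    have h2 : g ⊓ f x ≤ f (hH.chain t b) :=
      (ImplicativeSemilattice.inf_le_iff_le_him g (f x) (f (hH.chain t b))).mpr h
    have h3 := ih (g ⊓ f x) h2
    calc g ⊓ listInf f (x :: t) = (g ⊓ f x) ⊓ listInf f t := by
          rw [listInf_cons, inf_assoc]
      _ ≤ f b := h3

include hf1 hfimp in
theorem listInf_le_of_gen {l : List H} {b : H} (h : b ∈ hH.gen l) :
    listInf f l ≤ f b := by
  have hc : hH.chain l b = hH.one := h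
  have h1 : (⊤ : G) ≤ f (hH.chain l b) := by rw [hc, hf1]
  have := inf_chain_le hH f hfimp l b ⊤ h1
  rwa [top_inf_eq] at this

theorem le_listInf {l : List H} {g : G} (h : ∀ a ∈ l, g ≤ f a) : g ≤ listInf f l := by
  induction l with
  | nil => exact le_top
  | cons x t ih =>
    exact le_inf (h x (List.mem_cons_self : x ∈ x :: t)) (ih fun a ha => h a (List.mem_cons_of_mem x ha))

include hf1 hfimp in
theorem listInf_mono {l₁ l₂ : List H} (h1 : l₁ ≠ [])
    (h : (⋂ a ∈ l₁, hH.phi a) ⊆ ⋂ a ∈ l₂, hH.phi a) :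
    listInf f l₁ ≤ listInf f l₂ := by
  refine le_listInf f fun b hb => ?_
  have hsub : (⋂ a ∈ l₁, hH.phi a) ⊆ hH.phi b := by
    intro P hP
    have := h hP
    rw [hH.mem_biInter_phi] at this
    exact ⟨(this b hb).1, (this b hb).2⟩
  exact listInf_le_of_gen hH f hf1 hfimp (hH.biInter_phi_subset_phi h1 hsub)

include hf1 hfimp in
theorem listInf_welldef {l₁ l₂ : List H} (h1 : l₁ ≠ []) (h2 : l₂ ≠ [])
    (h : (⋂ a ∈ l₁, hH.phi a) = ⋂ a ∈ l₂, hH.phi a) :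
    listInf f l₁ = listInf f l₂ :=
  le_antisymm (listInf_mono hH f hf1 hfimp h1 h.le)
    (listInf_mono hH f hf1 hfimp h2 h.ge)

theorem biInter_append (l₁ l₂ : List H) :
    (⋂ a ∈ l₁ ++ l₂, hH.phi a) = (⋂ a ∈ l₁, hH.phi a) ∩ ⋂ a ∈ l₂, hH.phi a := by
  ext P
  simp only [Set.mem_iInter, Set.mem_inter_iff, List.mem_append]
  constructor
  · intro h; exact ⟨fun a ha => h a (Or.inl ha), fun a ha => h a (Or.inr ha)⟩
  · rintro ⟨ha, hb⟩ a (h | h)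
    · exact ha a h
    · exact hb a h

theorem listInf_append (l₁ l₂ : List H) :
    listInf f (l₁ ++ l₂) = listInf f l₁ ⊓ listInf f l₂ := by
  induction l₁ with
  | nil => simp
  | cons x t ih => simp [ih, inf_assoc]

theorem biInter_singleton (a : H) : (⋂ b ∈ ([a] : List H), hH.phi b) = hH.phi a := by
  ext P; simp

theorem biInter_one : (⋂ b ∈ ([hH.one] : List H), hH.phi b) = {P : Set H | hH.IsIrreducible P} := by
  rw [biInter_singleton]
  ext P
  simp only [HilbertAlgebra.phi, Set.mem_setOf_eq, and_iff_left_iff_imp]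
  exact fun h => h.1.1

end MainAux

theorem stmt_9 {H G : Type*} (hH : HilbertAlgebra H) [ImplicativeSemilattice G]
    (f : H → G) (hf1 : f hH.one = (⊤ : G))
    (hfimp : ∀ a b : H, f (hH.imp a b) = ImplicativeSemilattice.him (f a) (f b)) :
    ∃! h : hH.FC → G,
      (∀ U : hH.FC, (U : Set (Set H)) = {P : Set H | hH.IsIrreducible P} → h U = ⊤) ∧
      (∀ U V W : hH.FC,
        (W : Set (Set H)) = (U : Set (Set H)) ∩ (V : Set (Set H)) → h W = h U ⊓ h V) ∧
      (∀ (a : H) (U : hH.FC), (U : Set (Set H)) = hH.phi a → h U = f a) := by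
  classical
  have hrep : ∀ U : hH.FC, ∃ l : List H, l ≠ [] ∧ (U : Set (Set H)) = ⋂ a ∈ l, hH.phi a :=
    fun U => U.2
  let rep : hH.FC → List H := fun U => (hrep U).choose
  have hrepne : ∀ U, rep U ≠ [] := fun U => (hrep U).choose_spec.1
  have hrepeq : ∀ U : hH.FC, (U : Set (Set H)) = ⋂ a ∈ rep U, hH.phi a :=
    fun U => (hrep U).choose_spec.2
  let h0 : hH.FC → G := fun U => listInf f (rep U)
  have hwd : ∀ (U : hH.FC) (l : List H), l ≠ [] → (U : Set (Set H)) = ⋂ a ∈ l, hH.phi a →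
      h0 U = listInf f l := by
    intro U l hl hUl
    exact listInf_welldef hH f hf1 hfimp (hrepne U) hl ((hrepeq U).symm.trans hUl)
  refine ⟨h0, ⟨?_, ?_, ?_⟩, ?_⟩
  · -- h(X(H)) = ⊤
    intro U hU
    rw [hwd U [hH.one] (by simp) (hU.trans (biInter_one hH).symm)]
    simp [listInf, hf1]
  · -- h(U ∩ V) = h U ⊓ h V
    intro U V W hW
    rw [hwd W (rep U ++ rep V) (by simp [hrepne U])
        (by rw [hW, biInter_append, ← hrepeq U, ← hrepeq V]),
      listInf_append]
  · -- h(φ a) = f a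
    intro a U hU
    rw [hwd U [a] (by simp) (hU.trans (biInter_singleton hH a).symm)]
    simp [listInf]
  · -- uniqueness
    intro h' ⟨h'1, h'2, h'3⟩
    funext U
    suffices key : ∀ l : List H, l ≠ [] → ∀ V : hH.FC,
        (V : Set (Set H)) = ⋂ a ∈ l, hH.phi a → h' V = listInf f l by
      rw [key (rep U) (hrepne U) U (hrepeq U)]
    intro l
    induction l with
    | nil => intro h; exact absurd rfl h
    | cons x t ih =>
      intro _ V hV
      rcases eq_or_ne t [] with ht | ht
      · subst ht
        rw [h'3 x V (hV.trans (biInter_singleton hH x))]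
        simp [listInf]
      · have hmemx : hH.phi x ∈ hH.FC := ⟨[x], by simp, (biInter_singleton hH x).symm⟩
        have hmemt : (⋂ a ∈ t, hH.phi a) ∈ hH.FC := ⟨t, ht, rfl⟩
        have hsplit : (V : Set (Set H)) =
            (hH.phi x : Set (Set H)) ∩ ⋂ a ∈ t, hH.phi a := by
          rw [hV]
          ext P
          simp only [Set.mem_iInter, Set.mem_inter_iff, List.mem_cons]
          constructor
          · intro hh; exact ⟨hh x (Or.inl rfl), fun a ha => hh a (Or.inr ha)⟩
          · rintro ⟨h1, h2⟩ a (rfl | ha)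
            · exact h1
            · exact h2 a ha
        rw [h'2 ⟨hH.phi x, hmemx⟩ ⟨_, hmemt⟩ V hsplit,
          h'3 x ⟨hH.phi x, hmemx⟩ rfl, ih ht ⟨_, hmemt⟩ rfl]
        rfl
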